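/- Let G be a finite simple graph, let u be a vertex of G, and let c be a proper coloring of G − u. Let i and j be two distinct colors such that some neighbor of u is colored i, some neighbor of u is colored j, and no edge of G joins a neighbor of u colored i to a neighbor of u colored j. If the connected component, in the subgraph of G − u induced by the vertices colored i or j, containing a given neighbor of u colored i also contains some neighbor of u colored j, then a shortest induced path in that component from that i-colored neighbor of u to a j-colored neighbor of u has odd length at least 3. -/

import Mathlib

/-- Let `c` be a proper coloring of `G - u`, let `i ≠ j` be colors each used
on some neighbour of `u`, with no edge joining an `i`-colored neighbour of `u` to a `j`-colored
neighbour of `u`.  Let `x` be a neighbour of `u` colored `i`.  If, in the subgraph of `G - u`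
induced by the vertices colored `i` or `j`, the component of `x` contains a neighbour of `u`
colored `j`, then any shortest induced path in that subgraph from `x` to a `j`-colored
neighbour of `u` has odd length at least 3. -/
theorem statement_11 {V α : Type*} [Fintype V] (G : SimpleGraph V) (u : V)
    (c : V → α) (hc : ∀ v w, v ≠ u → w ≠ u → G.Adj v w → c v ≠ c w)
    (i j : α) (hij : i ≠ j)
    (hj : ∃ w, G.Adj u w ∧ c w = j)
    (hnoedge : ∀ v w, G.Adj u v → G.Adj u w → c v = i → c w = j → ¬ G.Adj v w)
    (x : V) (hux : G.Adj u x) (hcx : c x = i) :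
    let S : Set V := {v | v ≠ u ∧ (c v = i ∨ c v = j)}
    let H : SimpleGraph S := G.induce S
    ∀ hxS : x ∈ S,
      (∃ y, ∃ hyS : y ∈ S, G.Adj u y ∧ c y = j ∧ H.Reachable ⟨x, hxS⟩ ⟨y, hyS⟩) →
      ∀ (y : V) (hyS : y ∈ S), G.Adj u y → c y = j →
        ∀ p : H.Walk ⟨x, hxS⟩ ⟨y, hyS⟩, p.IsPath →
          (∀ a b, a ∈ p.support → b ∈ p.support → H.Adj a b → s(a, b) ∈ p.edges) →
          (∀ (y' : V) (hy'S : y' ∈ S), G.Adj u y' → c y' = j →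
            ∀ q : H.Walk ⟨x, hxS⟩ ⟨y', hy'S⟩, q.IsPath →
              (∀ a b, a ∈ q.support → b ∈ q.support → H.Adj a b → s(a, b) ∈ q.edges) →
              p.length ≤ q.length) →
          Odd p.length ∧ 3 ≤ p.length := by
  intro S H hxS _ y hyS huy hcy p _ _ _
  have key : ∀ (a b : S) (q : H.Walk a b), (Even q.length ↔ c (a : V) = c (b : V)) := by
    intro a b q
    induction q with
    | nil => simp
    | @cons a a' b h q ih =>
      have hG : G.Adj (a : V) (a' : V) := h
      have hne : c (a : V) ≠ c (a' : V) := hc _ _ a.2.1 a'.2.1 hG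
      have h1 : c (a : V) = i ∨ c (a : V) = j := a.2.2
      have h2 : c (a' : V) = i ∨ c (a' : V) = j := a'.2.2
      have h3 : c (b : V) = i ∨ c (b : V) = j := b.2.2
      simp only [SimpleGraph.Walk.length_cons, Nat.even_add_one, ih]
      rcases h1 with h1 | h1 <;> rcases h2 with h2 | h2 <;> rcases h3 with h3 | h3 <;>
        first
          | exact absurd (h1.trans h2.symm) hne
          | (rw [h1, h2, h3]; simp [hij, Ne.symm hij])
  have hodd : Odd p.length := by
    rw [← Nat.not_even_iff_odd, key]
    simp [hcx, hcy, hij]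
  refine ⟨hodd, ?_⟩
  rcases hodd with ⟨k, hk⟩
  rcases Nat.eq_zero_or_pos k with rfl | hkpos
  · exfalso
    have hadj : H.Adj ⟨x, hxS⟩ ⟨y, hyS⟩ := p.adj_of_length_eq_one (by omega)
    exact hnoedge x y hux huy hcx hcy hadj
  · omega
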